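/- Let V be a nonzero finite-dimensional complex normed vector space, let H be a Hermitian sesquilinear form on V of signature (1, dim V − 1), let f : V → V be a linear map, and let s ≥ 0 and C ≥ 0 be real numbers such that for every v ∈ V and every natural number n one has H(fⁿ v, fⁿ v) ≥ −C · s^{2n} · ‖v‖² (note H(w, w) is real since H is Hermitian). Then the characteristic polynomial of f has at most one complex root of modulus strictly greater than s, counted with multiplicity. In particular, any eigenvalue λ of f with |λ| > s is a simple root of the characteristic polynomial and is the unique eigenvalue of modulus greater than s. -/

import Mathlib

open scoped Classical

open Polynomial Module Matrix Filter ENNReal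
open scoped NNReal

lemma my_charpoly_sub_smul_one {R : Type*} [CommRing R] {n : Type*} [DecidableEq n] [Fintype n]
    (M : Matrix n n R) (μ : R) :
    (M - μ • (1 : Matrix n n R)).charpoly = M.charpoly.comp (X + C μ) := by
  have hσ : ∀ p : R[X], p.comp (X + C μ) = aeval (X + C μ) p := by
    intro p; simp [Polynomial.comp, aeval_def, Polynomial.algebraMap_eq]
  rw [Matrix.charpoly, Matrix.charpoly, hσ, ← AlgHom.coe_toRingHom, RingHom.map_det]
  congr 1
  ext i j
  by_cases h : i = j
  · subst h
    simp [charmatrix_apply_eq, Matrix.sub_apply, Matrix.smul_apply, Matrix.one_apply_eq, map_sub,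
      aeval_X, aeval_C]
    ring
  · simp [charmatrix_apply_ne _ _ _ h, Matrix.sub_apply, Matrix.smul_apply, Matrix.one_apply_ne h,
      aeval_C]

section Aux
variable {K : Type*} [Field K] {V : Type*} [AddCommGroup V] [Module K V] [FiniteDimensional K V]

lemma my_charpoly_shift (f : Module.End K V) (μ : K) :
    (f - μ • 1).charpoly = f.charpoly.comp (X + C μ) := by
  classical
  let b := Module.finBasis K V
  rw [← LinearMap.charpoly_toMatrix f b, ← LinearMap.charpoly_toMatrix (f - μ • 1) b]
  have : LinearMap.toMatrix b b (f - μ • 1) = LinearMap.toMatrix b b f - μ • 1 := by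
    simp [map_sub, _root_.map_smul, LinearMap.toMatrix_one]
  rw [this, my_charpoly_sub_smul_one]

lemma my_mult_eq (f : Module.End K V) (μ : K) :
    f.charpoly.rootMultiplicity μ = finrank K (f.maxGenEigenspace μ) := by
  have hsp : (f - μ • 1).maxGenEigenspace 0 = f.maxGenEigenspace μ := by
    ext x; simp [Module.End.mem_maxGenEigenspace]
  rw [rootMultiplicity_eq_natTrailingDegree, ← my_charpoly_shift,
    ← LinearMap.finrank_maxGenEigenspace_zero_eq, hsp]

lemma my_sum_finrank_le {ι : Type*} (E : ι → Submodule K V) (hind : iSupIndep E)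
    (S : Finset ι) : ∑ ν ∈ S, finrank K (E ν) ≤ finrank K ↥(⨆ ν ∈ S, E ν) := by
  classical
  induction S using Finset.induction_on with
  | empty => simp
  | @insert a S ha ih =>
    have hW' : (⨆ ν ∈ S, E ν) ≤ ⨆ j, ⨆ (_ : j ≠ a), E j := by
      refine iSup₂_le fun ν hν => ?_
      exact le_iSup₂ (f := fun j (_ : j ≠ a) => E j) ν (fun h => ha (h ▸ hν))
    have hdisj : Disjoint (E a) (⨆ ν ∈ S, E ν) := (hind a).mono_right hW'
    rw [Finset.sum_insert ha, Finset.iSup_insert]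
    have := Submodule.finrank_sup_add_finrank_inf_eq (E a) (⨆ ν ∈ S, E ν)
    rw [hdisj.eq_bot, finrank_bot, add_zero] at this
    rw [this]
    exact add_le_add le_rfl ih

end Aux

section AuxNormed
variable {W : Type*} [NormedAddCommGroup W] [NormedSpace ℂ W] [FiniteDimensional ℂ W]

lemma my_isUnit_clm (T : W →L[ℂ] W) (h : Function.Bijective T) : IsUnit T := by
  let e : W ≃ₗ[ℂ] W := LinearEquiv.ofBijective (T : W →ₗ[ℂ] W) h
  let ec : W ≃L[ℂ] W := e.toContinuousLinearEquiv
  have hTe : ∀ x, T x = ec x := fun x => rfl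
  refine ⟨⟨T, (ec.symm : W →L[ℂ] W), ?_, ?_⟩, rfl⟩
  · ext x
    simp only [ContinuousLinearMap.mul_apply, ContinuousLinearMap.coe_coe,
      ContinuousLinearMap.one_apply, hTe]
    exact ec.apply_symm_apply x
  · ext x
    simp only [ContinuousLinearMap.mul_apply, ContinuousLinearMap.coe_coe,
      ContinuousLinearMap.one_apply, hTe]
    exact ec.symm_apply_apply x

lemma my_pow_norm_decay (B : W →L[ℂ] W) {r : ℝ≥0} (hr : spectralRadius ℂ B < (r : ℝ≥0∞)) :
    ∀ᶠ n : ℕ in atTop, ‖B ^ n‖ ≤ (r : ℝ) ^ n := by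
  have hG := spectrum.pow_nnnorm_pow_one_div_tendsto_nhds_spectralRadius B
  have hev : ∀ᶠ n : ℕ in atTop, ((‖B ^ n‖₊ : ℝ≥0∞) ^ (1 / (n : ℝ))) < (r : ℝ≥0∞) :=
    hG.eventually_lt_const hr
  filter_upwards [hev, eventually_ge_atTop 1] with n hn hn1
  have hne : (n : ℝ) ≠ 0 := by positivity
  have : ((‖B ^ n‖₊ : ℝ≥0∞) ^ (1 / (n : ℝ))) ^ (n : ℝ) ≤ ((r : ℝ≥0∞)) ^ (n : ℝ) :=
    ENNReal.rpow_le_rpow hn.le (by positivity)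
  rw [← ENNReal.rpow_mul, one_div, inv_mul_cancel₀ hne, ENNReal.rpow_one] at this
  rw [ENNReal.rpow_natCast, ← ENNReal.coe_pow, ENNReal.coe_le_coe] at this
  calc ‖B ^ n‖ = ((‖B ^ n‖₊ : ℝ)) := rfl
  _ ≤ ((r ^ n : ℝ≥0) : ℝ) := by exact_mod_cast this
  _ = (r : ℝ) ^ n := by push_cast; ring

end AuxNormed

/-- Let `V` be a nonzero finite-dimensional complex normed vector space, `H`
a Hermitian sesquilinear form on `V` of signature `(1, dim V − 1)`, `f : V → V` linear, and
`s, C ≥ 0` real numbers with `H(fⁿ v, fⁿ v) ≥ −C·s^(2n)·‖v‖²` for all `v` and `n`. Then the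
characteristic polynomial of `f` has at most one complex root of modulus `> s`, counted with
multiplicity (hence such an eigenvalue is simple and unique). -/
theorem charpoly_at_most_one_large_root_of_hermitian_bound
    (V : Type*) [NormedAddCommGroup V] [NormedSpace ℂ V] [FiniteDimensional ℂ V] [Nontrivial V]
    (H : V →ₗ[ℂ] V →ₛₗ[starRingEnd ℂ] ℂ)
    (hHerm : ∀ u v : V, H v u = star (H u v))
    (P N : Submodule ℂ V) (hcompl : IsCompl P N)
    (hdimP : Module.finrank ℂ P = 1)
    (hdimN : Module.finrank ℂ N = Module.finrank ℂ V - 1)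
    (hPpos : ∀ p ∈ P, p ≠ 0 → 0 < (H p p).re)
    (hNneg : ∀ q ∈ N, q ≠ 0 → (H q q).re < 0)
    (hPN : ∀ p ∈ P, ∀ q ∈ N, H p q = 0)
    (f : V →ₗ[ℂ] V) (s C : ℝ) (hs : 0 ≤ s) (hC : 0 ≤ C)
    (hbound : ∀ (v : V) (n : ℕ),
      -C * s ^ (2 * n) * ‖v‖ ^ 2 ≤ (H ((f ^ n) v) ((f ^ n) v)).re) :
    ((LinearMap.charpoly f).roots.filter (fun z => s < ‖z‖)).card ≤ 1 := by
  by_contra hcard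
  push_neg at hcard
  set F := ((LinearMap.charpoly f).roots.filter (fun z => s < ‖z‖)) with hF
  have hcard2 : 2 ≤ F.card := hcard
  set S : Finset ℂ := F.toFinset with hSdef
  have hmemS : ∀ ν, ν ∈ S ↔ (ν ∈ (LinearMap.charpoly f).roots ∧ s < ‖ν‖) := by
    intro ν
    rw [hSdef, Multiset.mem_toFinset, hF, Multiset.mem_filter]
  set E : ℂ → Submodule ℂ V := fun μ => Module.End.maxGenEigenspace f μ with hE
  set W : Submodule ℂ V := ⨆ ν ∈ S, E ν with hW
  -- dimension of W is at least 2
  have hdimW : 2 ≤ finrank ℂ W := by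
    have h1 : F.card = ∑ ν ∈ S, F.count ν := (Multiset.toFinset_sum_count_eq F).symm
    have h2 : ∀ ν ∈ S, F.count ν = finrank ℂ (E ν) := by
      intro ν hν
      rw [hF, Multiset.count_filter, if_pos ((hmemS ν).mp hν).2, Polynomial.count_roots,
        my_mult_eq]
    calc 2 ≤ F.card := hcard2
    _ = ∑ ν ∈ S, finrank ℂ (E ν) := by rw [h1]; exact Finset.sum_congr rfl h2
    _ ≤ finrank ℂ W := my_sum_finrank_le E (Module.End.independent_maxGenEigenspace f) S
  -- independence-based claim: eigenvalues with eigenvector in W lie in S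
  have hclaim : ∀ (c : ℂ) (w : V), w ∈ W → f w = c • w → w ≠ 0 → c ∈ S := by
    intro c w hwW hfw hw0
    by_contra hcS
    have hwE : w ∈ E c := by
      rw [hE, Module.End.mem_maxGenEigenspace]
      exact ⟨1, by simp [pow_one, hfw]⟩
    have hWle : W ≤ ⨆ j, ⨆ (_ : j ≠ c), E j := by
      refine iSup₂_le fun ν hν => ?_
      exact le_iSup₂ (f := fun j (_ : j ≠ c) => E j) ν (fun h => hcS (h ▸ hν))
    have hdisj := (Module.End.independent_maxGenEigenspace f c)
    exact hw0 (Submodule.disjoint_def.mp hdisj w hwE (hWle hwW))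
  -- f-invariance of W
  have hfW : ∀ x ∈ W, f x ∈ W := by
    intro x hx
    have : W ≤ W.comap f := by
      refine iSup₂_le fun ν hν => ?_
      have h1 : Set.MapsTo f (E ν) (E ν) :=
        Module.End.mapsTo_maxGenEigenspace_of_comm (Commute.refl f) ν
      intro y hy
      exact Submodule.mem_comap.mpr (le_iSup₂ (f := fun j (_ : j ∈ S) => E j) ν hν (h1 hy))
    exact this hx
  -- find q in W ⊓ N
  have hdimV : 1 ≤ finrank ℂ V := Module.finrank_pos
  have hsum := Submodule.finrank_sup_add_finrank_inf_eq W N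
  have hle : finrank ℂ ↥(W ⊔ N) ≤ finrank ℂ V := Submodule.finrank_le _
  have hNW : 1 ≤ finrank ℂ ↥(W ⊓ N) := by omega
  have hWN_nebot : (W ⊓ N) ≠ ⊥ := by
    intro h
    rw [h, finrank_bot] at hNW
    omega
  obtain ⟨q, hqWN, hq0⟩ := Submodule.exists_mem_ne_zero_of_ne_bot hWN_nebot
  have hqW : q ∈ W := hqWN.1
  have hqneg : (H q q).re < 0 := hNneg q hqWN.2 hq0
  -- the restriction of f to W and its inverse
  let A : W →ₗ[ℂ] W := f.restrict hfW
  have hAinj : Function.Injective A := by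
    rw [← LinearMap.ker_eq_bot, LinearMap.ker_eq_bot']
    intro x hx
    by_contra hx0
    have hfx : f ↑x = (0 : ℂ) • (↑x : V) := by
      have : (↑(A x) : V) = f ↑x := rfl
      rw [hx] at this
      simp only [ZeroMemClass.coe_zero] at this
      rw [← this, zero_smul]
    have h0S : (0 : ℂ) ∈ S := hclaim 0 ↑x x.2 hfx (fun h => hx0 (Subtype.ext h))
    have := ((hmemS 0).mp h0S).2
    simp at this
    linarith
  have hAbij : Function.Bijective A := ⟨hAinj, (LinearMap.injective_iff_surjective).mp hAinj⟩
  let e : W ≃ₗ[ℂ] W := LinearEquiv.ofBijective A hAbij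
  let B : W →L[ℂ] W := (e.symm.toContinuousLinearEquiv : W ≃L[ℂ] W)
  have hBe : ∀ x : W, B x = e.symm x := fun _ => rfl
  have hAe : ∀ x : W, A x = e x := fun _ => rfl
  have hAB : ∀ x : W, A (B x) = x := fun x => by rw [hBe, hAe]; exact e.apply_symm_apply x
  have hABn : ∀ (n : ℕ) (x : W), (A ^ n) ((B ^ n) x) = x := by
    intro n
    induction n with
    | zero => intro x; simp
    | succ n ih =>
      intro x
      rw [pow_succ A, pow_succ' B]
      simp only [Module.End.mul_apply, ContinuousLinearMap.mul_apply]
      rw [hAB]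
      exact ih x
  have hfn : ∀ (n : ℕ) (x : W), (f ^ n) ↑x = ↑((A ^ n) x) := by
    intro n x
    rw [show A = f.restrict hfW from rfl, Module.End.pow_restrict, LinearMap.restrict_apply]
  -- min modulus over S
  have hSne : S.Nonempty := by
    rw [Finset.nonempty_iff_ne_empty]
    intro h
    rw [hSdef, Multiset.toFinset_eq_empty] at h
    rw [h] at hcard
    simp at hcard
  have hSabs_ne : (S.image (fun z : ℂ => ‖z‖)).Nonempty := hSne.image _
  set t : ℝ := (S.image (fun z : ℂ => ‖z‖)).min' hSabs_ne with ht
  have htS : ∀ ν ∈ S, t ≤ ‖ν‖ := fun ν hν =>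
    Finset.min'_le _ _ (Finset.mem_image_of_mem _ hν)
  have hst : s < t := by
    obtain ⟨ν, hν, hνt⟩ := Finset.mem_image.mp ((S.image (fun z : ℂ => ‖z‖)).min'_mem hSabs_ne)
    rw [ht, ← hνt]
    exact ((hmemS ν).mp hν).2
  have htpos : 0 < t := lt_of_le_of_lt hs hst
  -- spectrum of B is small
  set s' : ℝ := (s + t) / 2 with hs'
  have hs'pos : 0 < s' := by rw [hs']; linarith
  have hss' : s < s' := by rw [hs']; linarith
  have hs't : s' < t := by rw [hs']; linarith
  have hspecB : ∀ μ ∈ spectrum ℂ B, ‖μ‖₊ ≤ (t.toNNReal)⁻¹ := by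
    intro μ hμ
    rw [spectrum.mem_iff] at hμ
    set T : W →L[ℂ] W := algebraMap ℂ (W →L[ℂ] W) μ - B with hT
    have hTnotbij : ¬ Function.Bijective T := fun h => hμ (my_isUnit_clm T h)
    have hTnotinj : ¬ Function.Injective T := by
      intro h
      exact hTnotbij ⟨h, (LinearMap.injective_iff_surjective
        (f := (T : W →ₗ[ℂ] W))).mp h⟩
    obtain ⟨x, y, hxy, hne⟩ := Function.not_injective_iff.mp hTnotinj
    set w : W := x - y with hw
    have hw0 : w ≠ 0 := sub_ne_zero.mpr hne
    have hTw : T w = 0 := by rw [hw, map_sub, hxy, sub_self]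
    have hBw : B w = μ • w := by
      have : μ • w - B w = 0 := by
        rw [← hTw, hT]
        simp [Algebra.algebraMap_eq_smul_one]
      linear_combination (norm := module) -this
    have hμ0 : μ ≠ 0 := by
      intro h
      rw [h, zero_smul] at hBw
      apply hw0
      rw [← hAB w, hBw, map_zero]
    have hew : e w = μ⁻¹ • w := by
      have h1 : e.symm w = μ • w := by rw [← hBe, hBw]
      have h2 : w = e (μ • w) := by rw [← h1, e.apply_symm_apply]
      rw [_root_.map_smul] at h2
      rw [eq_comm, inv_smul_eq_iff₀ hμ0]
      exact h2
    have hfw : f ↑w = μ⁻¹ • (↑w : V) := by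
      have : (↑(A w) : V) = f ↑w := rfl
      rw [← this, hAe, hew]
      simp
    have hμS : μ⁻¹ ∈ S := hclaim μ⁻¹ ↑w w.2 hfw (fun h => hw0 (Subtype.ext h))
    have h1 : t ≤ ‖μ‖⁻¹ := by
      have := htS _ hμS
      rwa [norm_inv] at this
    have h2 : ‖μ‖ ≤ t⁻¹ := by
      have habs : 0 < ‖μ‖ := by
        simpa [norm_pos_iff] using hμ0
      rw [le_inv_comm₀ htpos habs] at h1
      exact h1
    have : ‖μ‖₊ = ‖μ‖.toNNReal := by
      ext
      simp [Real.coe_toNNReal _ (norm_nonneg μ)]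
    rw [this, ← Real.toNNReal_inv]
    exact Real.toNNReal_le_toNNReal h2
  have hsr : spectralRadius ℂ B < ((s'.toNNReal)⁻¹ : ℝ≥0) := by
    have h1 : spectralRadius ℂ B ≤ ((t.toNNReal)⁻¹ : ℝ≥0) := by
      rw [spectralRadius]
      exact iSup₂_le fun μ hμ => ENNReal.coe_le_coe.mpr (hspecB μ hμ)
    refine lt_of_le_of_lt h1 ?_
    rw [ENNReal.coe_lt_coe]
    have h2 : s'.toNNReal < t.toNNReal := by
      rw [Real.toNNReal_lt_toNNReal_iff htpos]
      exact hs't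
    have h3 : s'.toNNReal ≠ 0 := by
      simp [Real.toNNReal_eq_zero]
      linarith
    exact NNReal.inv_lt_inv h3 h2
  have hev := my_pow_norm_decay B hsr
  have hcoe : ((s'.toNNReal)⁻¹ : ℝ≥0) = (s'⁻¹ : ℝ) := by
    rw [NNReal.coe_inv, Real.coe_toNNReal _ hs'pos.le]
  -- eventual bound on (H q q).re
  set q' : W := ⟨q, hqW⟩ with hq'
  have hevent : ∀ᶠ n : ℕ in atTop,
      -(C * ((s / s') ^ 2) ^ n * ‖q‖ ^ 2) ≤ (H q q).re := by
    filter_upwards [hev] with n hn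
    have hfnq : (f ^ n) ↑((B ^ n) q') = q := by
      rw [hfn n ((B ^ n) q'), hABn n q']
    have hnormv : ‖(↑((B ^ n) q') : V)‖ ≤ s'⁻¹ ^ n * ‖q‖ := by
      have h1 : ‖(↑((B ^ n) q') : V)‖ = ‖(B ^ n) q'‖ := rfl
      have h2 : ‖(B ^ n) q'‖ ≤ ‖B ^ n‖ * ‖q'‖ := ContinuousLinearMap.le_opNorm _ _
      have h3 : ‖q'‖ = ‖q‖ := rfl
      rw [h1, h3] at *
      calc ‖(B ^ n) q'‖ ≤ ‖B ^ n‖ * ‖q‖ := by rw [← h3]; exact h2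
      _ ≤ s'⁻¹ ^ n * ‖q‖ := by
          apply mul_le_mul_of_nonneg_right _ (norm_nonneg q)
          rw [← hcoe] at *
          exact hn
    have hb := hbound (↑((B ^ n) q')) n
    rw [hfnq] at hb
    have hineq : C * s ^ (2 * n) * ‖(↑((B ^ n) q') : V)‖ ^ 2
        ≤ C * ((s / s') ^ 2) ^ n * ‖q‖ ^ 2 := by
      calc C * s ^ (2 * n) * ‖(↑((B ^ n) q') : V)‖ ^ 2
          ≤ C * s ^ (2 * n) * (s'⁻¹ ^ n * ‖q‖) ^ 2 := by
            apply mul_le_mul_of_nonneg_left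
              (pow_le_pow_left₀ (norm_nonneg _) hnormv 2) (by positivity)
      _ = C * ((s / s') ^ 2) ^ n * ‖q‖ ^ 2 := by
            rw [div_eq_mul_inv]; ring
    calc -(C * ((s / s') ^ 2) ^ n * ‖q‖ ^ 2)
        ≤ -(C * s ^ (2 * n) * ‖(↑((B ^ n) q') : V)‖ ^ 2) := neg_le_neg hineq
    _ = -C * s ^ (2 * n) * ‖(↑((B ^ n) q') : V)‖ ^ 2 := by ring
    _ ≤ (H q q).re := hb
  have hlim : Tendsto (fun n : ℕ => -(C * ((s / s') ^ 2) ^ n * ‖q‖ ^ 2)) atTop (nhds 0) := by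
    have h1 : Tendsto (fun n : ℕ => ((s / s') ^ 2) ^ n) atTop (nhds 0) := by
      have hlt : s / s' < 1 := (div_lt_one hs'pos).mpr hss'
      have hr1 : (s / s') ^ 2 < 1 := by
        have := pow_lt_one₀ (a := s / s') (by positivity) hlt (n := 2) (by norm_num)
        exact this
      exact tendsto_pow_atTop_nhds_zero_of_lt_one (by positivity) hr1
    have h2 := (h1.const_mul C).mul_const (‖q‖ ^ 2)
    simpa using h2.neg
  have : (0 : ℝ) ≤ (H q q).re := le_of_tendsto hlim hevent
  linarith
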